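/- Let G be an abelian group with infinitely many finite-index subgroups. Then |𝒞(G)| equals the cardinality of the torsion subgroup of Hom(G, ℝ/ℤ). -/

import Mathlib

open Cardinal

namespace CardTorsionCharsAux

/-- The `n`-torsion points of the circle form a finite set. -/
lemma finite_torsion_addCircle (n : ℕ) (hn : 0 < n) :
    {x : AddCircle (1 : ℝ) | n • x = 0}.Finite := by
  have hsub : {x : AddCircle (1 : ℝ) | n • x = 0} ⊆
      (fun m : ℤ => (((m : ℝ) / n : ℝ) : AddCircle (1 : ℝ))) '' Set.Ico (0 : ℤ) n := by
    rintro x hx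
    obtain ⟨r, rfl⟩ := QuotientAddGroup.mk_surjective x
    have hx' : ((n • r : ℝ) : AddCircle (1 : ℝ)) = 0 := by
      rw [AddCircle.coe_nsmul]; exact hx
    obtain ⟨k, hk⟩ := (AddCircle.coe_eq_zero_iff (1 : ℝ)).mp hx'
    -- hk : k • (1:ℝ) = n • r
    have hk' : (k : ℝ) = n * r := by
      simpa [zsmul_eq_mul, nsmul_eq_mul] using hk
    refine ⟨k % n, ⟨Int.emod_nonneg k (by exact_mod_cast hn.ne'),
      Int.emod_lt_of_pos k (by exact_mod_cast hn)⟩, ?_⟩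
    have hne : (n : ℝ) ≠ 0 := by exact_mod_cast hn.ne'
    have hr : r = (k : ℝ) / n := by field_simp [hk']; rw [hk']; ring
    have key : ((k % n : ℤ) : ℝ) / n - r = -((k / n : ℤ) : ℝ) := by
      have hz : (k % (n : ℤ)) = k - n * (k / n) := by
        have h0 : (n : ℤ) * (k / n) + k % n = k := Int.mul_ediv_add_emod k n
        omega
      have hcast : ((k % n : ℤ) : ℝ) = (k : ℝ) - (n : ℝ) * ((k / n : ℤ) : ℝ) := by
        rw [hz]; push_cast; ring
      rw [hr, hcast]
      field_simp
      ring
    -- reduce to difference in zmultiples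
    have hmem : (((k % n : ℤ) : ℝ) / n - r : ℝ) ∈ AddSubgroup.zmultiples (1 : ℝ) := by
      rw [key]
      exact ⟨-(k / n), by simp⟩
    have := (QuotientAddGroup.eq_iff_sub_mem).mpr hmem
    simpa using this
  exact ((Set.finite_Ico (0 : ℤ) n).image _).subset hsub

/-- Homs from a finite abelian group into the circle form a finite set. -/
lemma finite_hom (A : Type*) [AddCommGroup A] [Finite A] :
    Finite (A →+ AddCircle (1 : ℝ)) := by
  have hn : 0 < Nat.card A := Nat.card_pos
  have hfin : Finite {x : AddCircle (1 : ℝ) | Nat.card A • x = 0} :=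
    (finite_torsion_addCircle _ hn).to_subtype
  have : Finite (A → {x : AddCircle (1 : ℝ) | Nat.card A • x = 0}) := by
    infer_instance
  refine Finite.of_injective
    (fun f => fun a => (⟨f a, ?_⟩ : {x : AddCircle (1 : ℝ) | Nat.card A • x = 0})) ?_
  · show Nat.card A • f a = 0
    rw [← map_nsmul, card_nsmul_eq_zero', map_zero]
  · intro f g hfg
    ext a
    exact congrArg Subtype.val (congrFun hfg a)

variable {G : Type*} [AddCommGroup G]

/-- The set of characters vanishing on a finite-index subgroup is finite. -/
lemma finite_vanishing (N : AddSubgroup G) [N.FiniteIndex] :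
    Finite {χ : G →+ AddCircle (1 : ℝ) // ∀ x ∈ N, χ x = 0} := by
  have : Finite ((G ⧸ N) →+ AddCircle (1 : ℝ)) := finite_hom _
  refine Finite.of_injective
    (fun χ => QuotientAddGroup.lift N χ.1 (fun x hx => χ.2 x hx)) ?_
  intro χ₁ χ₂ hh
  apply Subtype.ext
  ext x
  have := congrFun (congrArg DFunLike.coe hh) ((x : G ⧸ N))
  exact this

/-- The natural map from `AddCircle (1:ℚ)` to `AddCircle (1:ℝ)`. -/
noncomputable def ratToReal : AddCircle (1 : ℚ) →+ AddCircle (1 : ℝ) :=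
  QuotientAddGroup.map _ _ (Rat.castHom ℝ).toAddMonoidHom (by
    rintro x ⟨k, hk⟩
    exact ⟨k, by push_cast [← hk]; simp⟩)

lemma ratToReal_ne_zero {x : AddCircle (1 : ℚ)} (hx : x ≠ 0) : ratToReal x ≠ 0 := by
  obtain ⟨q, rfl⟩ := QuotientAddGroup.mk_surjective x
  intro hc
  apply hx
  have hc' : ((q : ℝ) : AddCircle (1 : ℝ)) = 0 := hc
  obtain ⟨k, hk⟩ := (AddCircle.coe_eq_zero_iff (1 : ℝ)).mp hc'
  have : (q : ℚ) = (k : ℚ) := by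
    have : ((k : ℚ) : ℝ) = (q : ℝ) := by simpa [zsmul_eq_mul] using hk
    exact_mod_cast this.symm
  rw [AddCircle.coe_eq_zero_iff]
  exact ⟨k, by simp [← this]⟩

/-- Separation: characters into the real circle separate points of any abelian group. -/
lemma exists_char {Q : Type*} [AddCommGroup Q] {q : Q} (hq : q ≠ 0) :
    ∃ χ : Q →+ AddCircle (1 : ℝ), χ q ≠ 0 := by
  obtain ⟨c, hc⟩ := CharacterModule.exists_character_apply_ne_zero_of_ne_zero hq
  exact ⟨ratToReal.comp (c : Q →+ AddCircle (1 : ℚ)), ratToReal_ne_zero hc⟩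

/-- A subgroup of finite index is cut out by the torsion characters vanishing on it. -/
lemma mem_iff_forall_char (N : AddSubgroup G) [N.FiniteIndex] (x : G) :
    x ∈ N ↔ ∀ χ : {χ : G →+ AddCircle (1 : ℝ) // ∃ m : ℕ, 0 < m ∧ m • χ = 0},
      (∀ y ∈ N, χ.1 y = 0) → χ.1 x = 0 := by
  constructor
  · intro hx χ hχ
    exact hχ x hx
  · intro hx
    by_contra hxN
    have hq : (QuotientAddGroup.mk x : G ⧸ N) ≠ 0 := by
      simpa [QuotientAddGroup.eq_zero_iff] using hxN
    obtain ⟨χ₀, hχ₀⟩ := exists_char hq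
    set χ : G →+ AddCircle (1 : ℝ) := χ₀.comp (QuotientAddGroup.mk' N) with hχdef
    have hvanish : ∀ y ∈ N, χ y = 0 := by
      intro y hy
      have hy0 : (QuotientAddGroup.mk y : G ⧸ N) = 0 := (QuotientAddGroup.eq_zero_iff y).mpr hy
      show χ₀ ((QuotientAddGroup.mk' N) y) = 0
      rw [QuotientAddGroup.mk'_apply, hy0, map_zero]
    have htor : ∃ m : ℕ, 0 < m ∧ m • χ = 0 := by
      refine ⟨N.index, Nat.pos_of_ne_zero AddSubgroup.FiniteIndex.index_ne_zero, ?_⟩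
      ext y
      have hmem : N.index • y ∈ N := N.nsmul_index_mem y
      simp only [AddMonoidHom.nsmul_apply, AddMonoidHom.zero_apply, ← map_nsmul]
      exact hvanish _ hmem
    exact hχ₀ (by simpa [hχdef] using hx ⟨χ, htor⟩ hvanish)

end CardTorsionCharsAux

open CardTorsionCharsAux in
/-- If G has infinitely many finite-index subgroups, their number equals the cardinality of
the torsion subgroup of Hom(G, ℝ/ℤ). -/
theorem card_finiteIndex_eq_card_torsion_characters (G : Type*) [AddCommGroup G]
    (h : {N : AddSubgroup G | N.FiniteIndex}.Infinite) :
    Cardinal.mk {N : AddSubgroup G // N.FiniteIndex} =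
      Cardinal.mk {χ : G →+ AddCircle (1 : ℝ) // ∃ m : ℕ, 0 < m ∧ m • χ = 0} := by
  classical
  set T := {χ : G →+ AddCircle (1 : ℝ) // ∃ m : ℕ, 0 < m ∧ m • χ = 0} with hT
  have hC : Infinite {N : AddSubgroup G // N.FiniteIndex} := h.to_subtype
  -- the finite set of torsion characters vanishing on a finite-index subgroup
  have hSfin : ∀ N : {N : AddSubgroup G // N.FiniteIndex},
      {χ : T | ∀ y ∈ N.1, χ.1 y = 0}.Finite := by
    intro N
    have : N.1.FiniteIndex := N.2
    have hfin : Finite {χ : G →+ AddCircle (1 : ℝ) // ∀ x ∈ N.1, χ x = 0} :=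
      finite_vanishing N.1
    have : Finite ↥{χ : T | ∀ y ∈ N.1, χ.1 y = 0} := by
      refine Finite.of_injective
        (fun χ => (⟨χ.1.1, χ.2⟩ : {χ : G →+ AddCircle (1 : ℝ) // ∀ x ∈ N.1, χ x = 0})) ?_
      intro a b hab
      simp only [Subtype.mk.injEq] at hab
      exact Subtype.ext (Subtype.ext hab)
    exact Set.toFinite _
  -- injection from finite-index subgroups into finite sets of torsion characters
  set Φ : {N : AddSubgroup G // N.FiniteIndex} → Finset T :=
    fun N => (hSfin N).toFinset with hΦ
  have hΦinj : Function.Injective Φ := by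
    intro N M hNM
    have hsets : {χ : T | ∀ y ∈ N.1, χ.1 y = 0} = {χ : T | ∀ y ∈ M.1, χ.1 y = 0} :=
      ((hSfin N).toFinset_inj (ht := hSfin M)).mp hNM
    apply Subtype.ext
    ext x
    have : N.1.FiniteIndex := N.2
    have : M.1.FiniteIndex := M.2
    rw [mem_iff_forall_char N.1 x, mem_iff_forall_char M.1 x]
    constructor
    · intro hx χ hχ
      exact hx χ ((Set.ext_iff.mp hsets χ).mpr hχ)
    · intro hx χ hχ
      exact hx χ ((Set.ext_iff.mp hsets χ).mp hχ)
  have hTinf : Infinite T := by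
    by_contra hfin
    rw [not_infinite_iff_finite] at hfin
    have : Fintype T := Fintype.ofFinite T
    have : Finite (Finset T) := inferInstance
    have : Finite {N : AddSubgroup G // N.FiniteIndex} := Finite.of_injective Φ hΦinj
    exact absurd this (by simpa using hC.not_finite)
  -- first inequality
  have h1 : Cardinal.mk {N : AddSubgroup G // N.FiniteIndex} ≤ Cardinal.mk T := by
    calc Cardinal.mk {N : AddSubgroup G // N.FiniteIndex}
        ≤ Cardinal.mk (Finset T) := Cardinal.mk_le_of_injective hΦinj
      _ = Cardinal.mk T := Cardinal.mk_finset_of_infinite T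
  -- map torsion characters to their kernels
  have hker : ∀ χ : T, χ.1.ker.FiniteIndex := by
    rintro ⟨χ, m, hm, hmχ⟩
    have hrange : (Set.range χ).Finite := by
      refine (finite_torsion_addCircle m hm).subset ?_
      rintro _ ⟨x, rfl⟩
      show m • χ x = 0
      have := congrFun (congrArg DFunLike.coe hmχ) x
      simpa using this
    have : Finite χ.range := hrange.to_subtype
    have : Finite (G ⧸ χ.ker) := Finite.of_equiv _ (QuotientAddGroup.quotientKerEquivRange χ).symm.toEquiv
    exact χ.ker.finiteIndex_of_finite_quotient
  set k : T → {N : AddSubgroup G // N.FiniteIndex} := fun χ => ⟨χ.1.ker, hker χ⟩ with hk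
  -- fibers of k are finite
  have hfib : ∀ N : {N : AddSubgroup G // N.FiniteIndex},
      Cardinal.mk {χ : T // k χ = N} ≤ Cardinal.aleph0 := by
    intro N
    have : N.1.FiniteIndex := N.2
    have hfin : Finite {χ : G →+ AddCircle (1 : ℝ) // ∀ x ∈ N.1, χ x = 0} :=
      finite_vanishing N.1
    have : Finite {χ : T // k χ = N} := by
      refine Finite.of_injective (fun χ =>
        (⟨χ.1.1, ?_⟩ : {χ : G →+ AddCircle (1 : ℝ) // ∀ x ∈ N.1, χ x = 0})) ?_
      · intro x hx
        have hkerN : χ.1.1.ker = N.1 := congrArg Subtype.val χ.2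
        rw [← hkerN] at hx
        exact hx
      · intro a b hab
        simp only [Subtype.mk.injEq] at hab
        exact Subtype.ext (Subtype.ext (by have := congrArg Subtype.val hab; exact this))
    exact Cardinal.mk_le_aleph0
  -- second inequality
  have h2 : Cardinal.mk T ≤ Cardinal.mk {N : AddSubgroup G // N.FiniteIndex} := by
    have heq : Cardinal.mk T =
        Cardinal.sum (fun N : {N : AddSubgroup G // N.FiniteIndex} =>
          Cardinal.mk {χ : T // k χ = N}) := by
      rw [← Cardinal.mk_sigma]
      exact (Cardinal.mk_congr (Equiv.sigmaFiberEquiv k)).symm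
    have hle : Cardinal.sum (fun N : {N : AddSubgroup G // N.FiniteIndex} =>
          Cardinal.mk {χ : T // k χ = N}) ≤
        Cardinal.sum (fun _ : {N : AddSubgroup G // N.FiniteIndex} => Cardinal.aleph0) :=
      Cardinal.sum_le_sum _ _ hfib
    rw [heq]
    refine hle.trans ?_
    rw [Cardinal.sum_const']
    have hCcard : Cardinal.aleph0 ≤ Cardinal.mk {N : AddSubgroup G // N.FiniteIndex} :=
      Cardinal.infinite_iff.mp hC
    exact le_of_eq (Cardinal.mul_eq_left hCcard hCcard Cardinal.aleph0_ne_zero)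
  exact le_antisymm h1 h2
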